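/- arXiv:math/0608682 — 5 statements merged into one kernel-verified Lean document; each statement's English description precedes it below -/
import Mathlib

section
/- A unitary matrix u ∈ U(n) is symmetric (uᵗ = u) if and only if there exists an orthogonal matrix k ∈ O(n) such that k u k⁻¹ is diagonal. -/
open Matrix Module.End

/-- Simultaneous orthogonal diagonalization of two commuting real symmetric matrices. -/
theorem sim_diag (n : ℕ) (A B : Matrix (Fin n) (Fin n) ℝ)
    (hA : A.IsHermitian) (hB : B.IsHermitian) (hAB : A * B = B * A) :
    ∃ k : Matrix (Fin n) (Fin n) ℝ, k * kᵀ = 1 ∧ kᵀ * k = 1 ∧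
      (k * A * kᵀ).IsDiag ∧ (k * B * kᵀ).IsDiag := by
  classical
  set TA := Matrix.toEuclideanLin A with hTA
  set TB := Matrix.toEuclideanLin B with hTB
  have hsA : TA.IsSymmetric := Matrix.isHermitian_iff_isSymmetric.mp hA
  have hsB : TB.IsSymmetric := Matrix.isHermitian_iff_isSymmetric.mp hB
  have hC : Commute TA TB := by
    show TA * TB = TB * TA
    ext x l
    simp only [Module.End.mul_apply, hTA, hTB, Matrix.toEuclideanLin_apply]
    simp [Matrix.mulVec_mulVec, hAB]
  set V : ℝ × ℝ → Submodule ℝ (EuclideanSpace ℝ (Fin n)) :=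
    fun i => eigenspace TA i.2 ⊓ eigenspace TB i.1 with hV
  have internal : DirectSum.IsInternal V :=
    LinearMap.IsSymmetric.directSum_isInternal_of_commute hsA hsB hC
  have hfam : OrthogonalFamily ℝ (fun i => V i) fun i => (V i).subtypeₗᵢ :=
    LinearMap.IsSymmetric.orthogonalFamily_eigenspace_inf_eigenspace hsA hsB
  -- restrict to the nonzero joint eigenspaces, a finite family
  have internal' : DirectSum.IsInternal (fun i : {i // V i ≠ ⊥} => V i) :=
    DirectSum.isInternal_ne_bot_iff.mpr internal
  have hfam' : OrthogonalFamily ℝ (fun i : {i // V i ≠ ⊥} => V i)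
      (fun i => (V i.1).subtypeₗᵢ) := hfam.comp Subtype.val_injective
  have hind : iSupIndep (fun i : {i // V i ≠ ⊥} => V i) :=
    ((DirectSum.isInternal_submodule_iff_iSupIndep_and_iSup_eq_top _).mp internal').1
  have hfin : Finite {i // V i ≠ ⊥} :=
    WellFoundedGT.finite_of_iSupIndep hind (fun i => i.2)
  letI : Fintype {i // V i ≠ ⊥} := Fintype.ofFinite _
  have hrank : Module.finrank ℝ (EuclideanSpace ℝ (Fin n)) = n := by simp
  set b := internal'.subordinateOrthonormalBasis hrank hfam' with hbdef
  set k : Matrix (Fin n) (Fin n) ℝ := Matrix.of (fun i j => b i j) with hk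
  have hinner : ∀ i j : Fin n, (∑ l, b i l * b j l) = if i = j then 1 else 0 := by
    intro i j
    have := (orthonormal_iff_ite.mp b.orthonormal) i j
    rw [PiLp.inner_apply] at this
    simpa [mul_comm] using this
  have hkk : k * kᵀ = 1 := by
    ext i j
    simp only [Matrix.mul_apply, Matrix.transpose_apply, hk, Matrix.of_apply, Matrix.one_apply]
    exact hinner i j
  have hkk' : kᵀ * k = 1 := mul_eq_one_comm.mp hkk
  have key : ∀ (M : Matrix (Fin n) (Fin n) ℝ),
      (∀ j : Fin n, ∃ ν : ℝ, Matrix.toEuclideanLin M (b j) = ν • b j) →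
      (k * M * kᵀ).IsDiag := by
    intro M hM i j hij
    obtain ⟨ν, hν⟩ := hM j
    have hcoord : ∀ l, (∑ m, M l m * b j m) = ν * b j l := by
      intro l
      have := congrFun (congrArg (WithLp.equiv 2 (Fin n → ℝ)) hν) l
      simpa [Matrix.toEuclideanLin_apply, Matrix.mulVec, dotProduct] using this
    have hentry : (k * M * kᵀ) i j = ν * ∑ l, b i l * b j l := by
      calc (k * M * kᵀ) i j = ∑ l, b i l * (ν * b j l) := by
            simp only [Matrix.mul_apply, Matrix.transpose_apply, hk, Matrix.of_apply,
              Finset.sum_mul]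
            rw [Finset.sum_comm]
            refine Finset.sum_congr rfl fun l _ => ?_
            rw [← hcoord l, Finset.mul_sum]
            exact Finset.sum_congr rfl fun m _ => by ring
        _ = ν * ∑ l, b i l * b j l := by
            rw [Finset.mul_sum]; exact Finset.sum_congr rfl fun l _ => by ring
    show (k * M * kᵀ) i j = 0
    rw [hentry, hinner i j, if_neg hij, mul_zero]
  refine ⟨k, hkk, hkk', key A ?_, key B ?_⟩
  · intro j
    have hmem := internal'.subordinateOrthonormalBasis_subordinate hrank j hfam'
    exact ⟨(internal'.subordinateOrthonormalBasisIndex hrank j hfam').1.2,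
      Module.End.mem_eigenspace_iff.mp hmem.1⟩
  · intro j
    have hmem := internal'.subordinateOrthonormalBasis_subordinate hrank j hfam'
    exact ⟨(internal'.subordinateOrthonormalBasisIndex hrank j hfam').1.1,
      Module.End.mem_eigenspace_iff.mp hmem.2⟩

theorem isDiag_transpose_eq {n : ℕ} {D : Matrix (Fin n) (Fin n) ℂ} (h : D.IsDiag) : Dᵀ = D := by
  ext i j
  by_cases hij : i = j
  · subst hij; rfl
  · rw [Matrix.transpose_apply, h hij, h (Ne.symm hij)]

/-- A unitary matrix `u ∈ U(n)` is symmetric (`uᵀ = u`) iff there exists a real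
orthogonal matrix `k ∈ O(n)` such that `k u k⁻¹` is diagonal. -/
theorem stmt_0 (n : ℕ) (u : Matrix (Fin n) (Fin n) ℂ)
    (hu : u ∈ Matrix.unitaryGroup (Fin n) ℂ) :
    uᵀ = u ↔ ∃ k : Matrix (Fin n) (Fin n) ℝ, k ∈ Matrix.orthogonalGroup (Fin n) ℝ ∧
      ((k.map (fun x : ℝ => (x : ℂ))) * u * (k.map (fun x : ℝ => (x : ℂ)))⁻¹).IsDiag := by
  constructor
  · intro hs
    have hs' : ∀ i j, u j i = u i j := fun i j => (congrFun (congrFun hs j) i).symm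
    -- real and imaginary parts
    set A : Matrix (Fin n) (Fin n) ℝ := Matrix.of (fun i j => (u i j).re) with hAdef
    set B : Matrix (Fin n) (Fin n) ℝ := Matrix.of (fun i j => (u i j).im) with hBdef
    have hA : A.IsHermitian := by
      ext i j
      simp [Matrix.conjTranspose_apply, hAdef, hs' j i]
    have hB : B.IsHermitian := by
      ext i j
      simp [Matrix.conjTranspose_apply, hBdef, hs' j i]
    have hu1 : star u * u = 1 := Matrix.mem_unitaryGroup_iff'.mp hu
    have hAB : A * B = B * A := by
      ext i j
      have h1 : (star u * u) i j = (1 : Matrix (Fin n) (Fin n) ℂ) i j := by rw [hu1]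
      have h2 : Complex.im ((star u * u) i j) = 0 := by
        rw [h1, Matrix.one_apply]
        split <;> simp
      rw [Matrix.mul_apply] at h2
      simp only [Matrix.star_apply] at h2
      rw [Complex.im_sum] at h2
      have h3 : ∀ l, (star (u l i) * u l j).im = A i l * B l j - B i l * A l j := by
        intro l
        rw [hs' i l]
        simp [Complex.mul_im, hAdef, hBdef]
        ring
      rw [Finset.sum_congr rfl (fun l _ => h3 l)] at h2
      rw [Finset.sum_sub_distrib] at h2
      have := sub_eq_zero.mp h2
      simpa [Matrix.mul_apply] using this
    obtain ⟨k, hkk, hkk', hdA, hdB⟩ := sim_diag n A B hA hB hAB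
    refine ⟨k, ?_, ?_⟩
    · rw [Matrix.mem_orthogonalGroup_iff (Fin n) ℝ]
      simpa [Matrix.star_eq_conjTranspose] using hkk
    · set km : Matrix (Fin n) (Fin n) ℂ := k.map (fun x : ℝ => (x : ℂ)) with hkm
      have hmapmul : ∀ M N : Matrix (Fin n) (Fin n) ℝ,
          (M * N).map (fun x : ℝ => (x : ℂ)) =
            M.map (fun x : ℝ => (x : ℂ)) * N.map (fun x : ℝ => (x : ℂ)) := by
        intro M N
        ext i j
        simp [Matrix.mul_apply, Matrix.map_apply]
      have hmkk : km * kmᵀ = 1 := by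
        rw [hkm, ← Matrix.transpose_map, ← hmapmul, hkk]
        ext i j
        simp [Matrix.map_apply, Matrix.one_apply]
        split <;> simp
      have hinv : km⁻¹ = kmᵀ := Matrix.inv_eq_right_inv hmkk
      rw [hinv]
      intro i j hij
      -- u = A.map coe + I • B.map coe
      have hudecomp : u = A.map (fun x : ℝ => (x : ℂ)) + Complex.I • B.map (fun x : ℝ => (x : ℂ)) := by
        ext i' j'
        simp [hAdef, hBdef, Matrix.map_apply, Complex.ext_iff]
      have htm : kmᵀ = kᵀ.map (fun x : ℝ => (x : ℂ)) := by
        ext i' j'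
        simp [hkm, Matrix.map_apply]
      have : km * u * kmᵀ = (k * A * kᵀ).map (fun x : ℝ => (x : ℂ)) +
          Complex.I • (k * B * kᵀ).map (fun x : ℝ => (x : ℂ)) := by
        rw [hudecomp, Matrix.mul_add, Matrix.add_mul]
        rw [Matrix.mul_smul, Matrix.smul_mul]
        rw [hmapmul, hmapmul, hmapmul, hmapmul, ← htm, hkm]
      show (km * u * kmᵀ) i j = 0
      rw [this]
      simp only [Matrix.add_apply, Matrix.smul_apply, Matrix.map_apply]
      rw [hdA hij, hdB hij]
      simp
  · rintro ⟨k, hk, hdiag⟩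
    set km : Matrix (Fin n) (Fin n) ℂ := k.map (fun x : ℝ => (x : ℂ)) with hkm
    have hmapmul : ∀ M N : Matrix (Fin n) (Fin n) ℝ,
        (M * N).map (fun x : ℝ => (x : ℂ)) =
          M.map (fun x : ℝ => (x : ℂ)) * N.map (fun x : ℝ => (x : ℂ)) := by
      intro M N
      ext i j
      simp [Matrix.mul_apply, Matrix.map_apply]
    have hkk : k * kᵀ = 1 := by
      have := (Matrix.mem_orthogonalGroup_iff (Fin n) ℝ).mp hk
      simpa [Matrix.star_eq_conjTranspose] using this
    have hkk' : kᵀ * k = 1 := mul_eq_one_comm.mp hkk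
    have hmapone : (1 : Matrix (Fin n) (Fin n) ℝ).map (fun x : ℝ => (x : ℂ)) = 1 := by
      ext i j
      simp [Matrix.map_apply, Matrix.one_apply]
      split <;> simp
    have hmkk : km * kmᵀ = 1 := by rw [hkm, ← Matrix.transpose_map, ← hmapmul, hkk, hmapone]
    have hmkk' : kmᵀ * km = 1 := mul_eq_one_comm.mp hmkk
    have hinv : km⁻¹ = kmᵀ := Matrix.inv_eq_right_inv hmkk
    rw [hinv] at hdiag
    set D := km * u * kmᵀ with hD
    have hDt : Dᵀ = D := isDiag_transpose_eq hdiag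
    have hurec : u = kmᵀ * D * km := by
      rw [hD]
      calc u = (kmᵀ * km) * u * (kmᵀ * km) := by rw [hmkk']; rw [one_mul, mul_one]
        _ = kmᵀ * (km * u * kmᵀ) * km := by simp only [Matrix.mul_assoc]
    calc uᵀ = (kmᵀ * D * km)ᵀ := by rw [← hurec]
      _ = kmᵀ * Dᵀ * km := by
          rw [Matrix.transpose_mul, Matrix.transpose_mul, Matrix.transpose_transpose]
          simp only [Matrix.mul_assoc]
      _ = kmᵀ * D * km := by rw [hDt]
      _ = u := hurec.symm
end

section
/- The map w ↦ L_w = {z ∈ ℂⁿ : z − w z̄ = 0} is a bijection from the set W(n) of symmetric unitary matrices onto the set of Lagrangian subspaces of ℂⁿ, with inverse sending L = u(L₀) (for any u ∈ U(n)) to u uᵗ. -/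
open Matrix

/-- The standard Hermitian product on `ℂⁿ`. -/
noncomputable def hermP {n : ℕ} (z w : Fin n → ℂ) : ℂ :=
  ∑ i, z i * (starRingEnd ℂ) (w i)

/-- The standard symplectic form `ω = -Im h` on `ℂⁿ` viewed as a real vector space. -/
noncomputable def omegaP {n : ℕ} (z w : Fin n → ℂ) : ℝ := -(hermP z w).im

/-- A real subspace of `ℂⁿ` is Lagrangian if `ω` vanishes on it and its real dimension is `n`. -/
def IsLagrangian {n : ℕ} (L : Submodule ℝ (Fin n → ℂ)) : Prop :=
  (∀ z ∈ L, ∀ w ∈ L, omegaP z w = 0) ∧ Module.finrank ℝ (↥L) = n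

/-- The standard Lagrangian `L₀ = ℝⁿ ⊂ ℂⁿ`, as a set. -/
def L0set (n : ℕ) : Set (Fin n → ℂ) := {z | ∀ i, (z i).im = 0}

/-- `σ` is the Lagrangian involution associated to `L`: the real-linear map equal to the
identity on `L` and to `-Id` on `iL`. -/
def IsLagInv {n : ℕ} (L : Submodule ℝ (Fin n → ℂ))
    (σ : (Fin n → ℂ) →ₗ[ℝ] (Fin n → ℂ)) : Prop :=
  (∀ z ∈ L, σ z = z) ∧ (∀ z ∈ L, σ (Complex.I • z) = -(Complex.I • z))

namespace Stmt6Aux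

variable {n : ℕ}

lemma star_fun_eq (z : Fin n → ℂ) : (fun i => (starRingEnd ℂ) (z i)) = star z := rfl

lemma hermP_eq_dot (z w : Fin n → ℂ) : hermP z w = z ⬝ᵥ star w := rfl

lemma conj_hermP (z w : Fin n → ℂ) :
    (starRingEnd ℂ) (hermP z w) = hermP w z := by
  simp only [hermP, map_sum]
  refine Finset.sum_congr rfl fun i _ => ?_
  rw [RingHom.map_mul, Complex.conj_conj, mul_comm]

/-- `star (M *ᵥ v) = (star M)ᵀ *ᵥ star v` -/
lemma star_mulVec' (M : Matrix (Fin n) (Fin n) ℂ) (v : Fin n → ℂ) :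
    star (M *ᵥ v) = (star M)ᵀ *ᵥ star v := by
  rw [star_mulVec, ← vecMul_transpose]
  rfl

/-- The conjugation map `z ↦ w ⬝ star z` as an `ℝ`-linear map. -/
noncomputable def conjMap (w : Matrix (Fin n) (Fin n) ℂ) :
    (Fin n → ℂ) →ₗ[ℝ] (Fin n → ℂ) where
  toFun z := w *ᵥ star z
  map_add' z z' := by simp [star_add, mulVec_add]
  map_smul' r z := by simp [star_smul, mulVec_smul]

lemma conjMap_apply (w : Matrix (Fin n) (Fin n) ℂ) (z : Fin n → ℂ) :
    conjMap w z = w *ᵥ star z := rfl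

/-- The positive "kernel" submodule `L_w`. -/
noncomputable def lagSub (w : Matrix (Fin n) (Fin n) ℂ) : Submodule ℝ (Fin n → ℂ) :=
  LinearMap.ker (LinearMap.id - conjMap w)

lemma mem_lagSub {w : Matrix (Fin n) (Fin n) ℂ} {z : Fin n → ℂ} :
    z ∈ lagSub w ↔ z = w *ᵥ star z := by
  simp [lagSub, LinearMap.mem_ker, LinearMap.sub_apply, sub_eq_zero, conjMap_apply]

lemma lagSub_coe (w : Matrix (Fin n) (Fin n) ℂ) :
    (lagSub w : Set (Fin n → ℂ)) =
      {z | z - w.mulVec (fun i => (starRingEnd ℂ) (z i)) = 0} := by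
  ext z
  simp only [SetLike.mem_coe, mem_lagSub, Set.mem_setOf_eq, star_fun_eq, sub_eq_zero]

section WSym

variable {w : Matrix (Fin n) (Fin n) ℂ}

lemma starT_eq (hs : wᵀ = w) : (star w)ᵀ = star w := by
  have : (star w)ᵀ = star (wᵀ) := by
    ext i j
    simp [Matrix.star_apply, Matrix.transpose_apply]
  rw [this, hs]

lemma conjMap_invol (hw : w ∈ Matrix.unitaryGroup (Fin n) ℂ) (hs : wᵀ = w)
    (z : Fin n → ℂ) : conjMap w (conjMap w z) = z := by
  rw [conjMap_apply, conjMap_apply, star_mulVec', star_star, starT_eq hs,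
    mulVec_mulVec, (Matrix.mem_unitaryGroup_iff).mp hw, one_mulVec]

lemma herm_symm_of_mem (hw : w ∈ Matrix.unitaryGroup (Fin n) ℂ)
    {z z' : Fin n → ℂ} (hz : z = w *ᵥ star z) (hz' : z' = w *ᵥ star z') :
    hermP z z' = hermP z' z := by
  have h1 : star z' = (star w)ᵀ *ᵥ z' := by
    conv_lhs => rw [hz']
    rw [star_mulVec', star_star]
  rw [hermP_eq_dot, h1, dotProduct_mulVec, vecMul_transpose]
  conv_lhs => rw [hz, mulVec_mulVec, (Matrix.mem_unitaryGroup_iff').mp hw, one_mulVec]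
  rw [dotProduct_comm, hermP_eq_dot]

lemma herm_im_zero (hw : w ∈ Matrix.unitaryGroup (Fin n) ℂ)
    {z z' : Fin n → ℂ} (hz : z = w *ᵥ star z) (hz' : z' = w *ᵥ star z') :
    omegaP z z' = 0 := by
  have : (starRingEnd ℂ) (hermP z z') = hermP z z' := by
    rw [conj_hermP, herm_symm_of_mem hw hz hz']
  rw [omegaP, Complex.conj_eq_iff_im.mp this, neg_zero]

/-- the negative kernel -/
noncomputable def lagSubNeg (w : Matrix (Fin n) (Fin n) ℂ) : Submodule ℝ (Fin n → ℂ) :=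
  LinearMap.ker (LinearMap.id + conjMap w)

lemma mem_lagSubNeg {z : Fin n → ℂ} :
    z ∈ lagSubNeg w ↔ w *ᵥ star z = -z := by
  rw [lagSubNeg, LinearMap.mem_ker, LinearMap.add_apply, LinearMap.id_apply, conjMap_apply,
    add_eq_zero_iff_eq_neg']

lemma star_I_smul (z : Fin n → ℂ) :
    star (Complex.I • z) = (-Complex.I) • star z := by
  rw [star_smul, Complex.star_def, Complex.conj_I]

lemma smul_I_mem_neg {z : Fin n → ℂ} (hz : z ∈ lagSub w) :
    Complex.I • z ∈ lagSubNeg w := by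
  rw [mem_lagSub] at hz
  rw [mem_lagSubNeg, star_I_smul, mulVec_smul, ← hz, neg_smul]

lemma smul_I_mem_pos {z : Fin n → ℂ} (hz : z ∈ lagSubNeg w) :
    Complex.I • z ∈ lagSub w := by
  rw [mem_lagSub, star_I_smul, mulVec_smul, mem_lagSubNeg.mp hz, smul_neg, neg_smul, neg_neg]

lemma lagSub_inf_neg : lagSub w ⊓ lagSubNeg w = ⊥ := by
  rw [eq_bot_iff]
  rintro z ⟨h1, h2⟩
  rw [SetLike.mem_coe, mem_lagSub] at h1
  rw [SetLike.mem_coe, mem_lagSubNeg] at h2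
  have hzz : z = -z := h1.trans h2
  have hz0 : z = 0 := by
    funext i
    have h := congrFun hzz i
    rw [Pi.neg_apply] at h
    have h2 : (2 : ℂ) * z i = 0 := by linear_combination h
    simpa using h2
  simp [hz0, Submodule.mem_bot]

lemma mem_pos_part (hw : w ∈ Matrix.unitaryGroup (Fin n) ℂ) (hs : wᵀ = w) (z : Fin n → ℂ) :
    (2⁻¹ : ℝ) • (z + conjMap w z) ∈ lagSub w := by
  rw [mem_lagSub]
  have : w *ᵥ star ((2⁻¹ : ℝ) • (z + conjMap w z)) =
      (2⁻¹ : ℝ) • (conjMap w (z + conjMap w z)) := by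
    rw [← conjMap_apply]; exact (conjMap w).map_smul _ _
  rw [this, map_add, conjMap_invol hw hs]
  rw [add_comm]

lemma mem_neg_part (hw : w ∈ Matrix.unitaryGroup (Fin n) ℂ) (hs : wᵀ = w) (z : Fin n → ℂ) :
    (2⁻¹ : ℝ) • (z - conjMap w z) ∈ lagSubNeg w := by
  rw [mem_lagSubNeg]
  have : w *ᵥ star ((2⁻¹ : ℝ) • (z - conjMap w z)) =
      (2⁻¹ : ℝ) • (conjMap w (z - conjMap w z)) := by
    rw [← conjMap_apply]; exact (conjMap w).map_smul _ _
  rw [this, map_sub, conjMap_invol hw hs, ← smul_neg, neg_sub]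

lemma lagSub_sup_neg (hw : w ∈ Matrix.unitaryGroup (Fin n) ℂ) (hs : wᵀ = w) :
    lagSub w ⊔ lagSubNeg w = ⊤ := by
  rw [eq_top_iff]
  intro z _
  have ha := mem_pos_part hw hs z
  have hb := mem_neg_part hw hs z
  have : z = (2⁻¹ : ℝ) • (z + conjMap w z) + (2⁻¹ : ℝ) • (z - conjMap w z) := by
    rw [← smul_add]
    have : z + conjMap w z + (z - conjMap w z) = (2 : ℝ) • z := by
      rw [two_smul]; abel
    rw [this, smul_smul]
    norm_num
  rw [this]
  exact Submodule.add_mem _ (Submodule.mem_sup_left ha) (Submodule.mem_sup_right hb)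

/-- multiplication by I as an ℝ-linear equiv between the two kernels -/
noncomputable def smulIEquiv (w : Matrix (Fin n) (Fin n) ℂ) :
    (lagSub w) ≃ₗ[ℝ] (lagSubNeg w) where
  toFun z := ⟨Complex.I • (z : Fin n → ℂ), smul_I_mem_neg z.2⟩
  map_add' z z' := by
    apply Subtype.ext
    simp only [Submodule.coe_add, smul_add]
  map_smul' r z := by
    apply Subtype.ext
    simp only [Submodule.coe_smul, RingHom.id_apply, SetLike.val_smul]
    exact smul_comm _ _ _
  invFun z := ⟨(-Complex.I) • (z : Fin n → ℂ), by
    have h1 := smul_I_mem_pos z.2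
    have h2 : (-Complex.I) • (z : Fin n → ℂ) = (-1 : ℝ) • (Complex.I • (z : Fin n → ℂ)) := by
      rw [neg_smul, neg_one_smul]
    rw [h2]
    exact Submodule.smul_mem _ _ h1⟩
  left_inv z := by
    apply Subtype.ext
    show (-Complex.I) • (Complex.I • (z : Fin n → ℂ)) = z
    rw [smul_smul, neg_mul, Complex.I_mul_I, neg_neg, one_smul]
  right_inv z := by
    apply Subtype.ext
    show Complex.I • ((-Complex.I) • (z : Fin n → ℂ)) = z
    rw [smul_smul, mul_neg, Complex.I_mul_I, neg_neg, one_smul]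

lemma finrank_total : Module.finrank ℝ (Fin n → ℂ) = 2 * n := by
  rw [Module.finrank_pi_fintype]
  simp [Complex.finrank_real_complex, mul_comm]

lemma finrank_lagSub (hw : w ∈ Matrix.unitaryGroup (Fin n) ℂ) (hs : wᵀ = w) :
    Module.finrank ℝ (lagSub w) = n := by
  have h1 : Module.finrank ℝ (lagSub w) = Module.finrank ℝ (lagSubNeg w) :=
    (smulIEquiv w).finrank_eq
  have h2 := Submodule.finrank_sup_add_finrank_inf_eq (lagSub w) (lagSubNeg w)
  rw [lagSub_sup_neg hw hs, lagSub_inf_neg] at h2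
  rw [finrank_top, finrank_bot, add_zero, finrank_total, ← h1] at h2
  omega

lemma lagSub_isLagrangian (hw : w ∈ Matrix.unitaryGroup (Fin n) ℂ) (hs : wᵀ = w) :
    IsLagrangian (lagSub w) := by
  refine ⟨fun z hz z' hz' => ?_, finrank_lagSub hw hs⟩
  exact herm_im_zero hw (mem_lagSub.mp hz) (mem_lagSub.mp hz')

lemma lagSub_injective {w' : Matrix (Fin n) (Fin n) ℂ}
    (hw : w ∈ Matrix.unitaryGroup (Fin n) ℂ) (hs : wᵀ = w)
    (hw' : w' ∈ Matrix.unitaryGroup (Fin n) ℂ) (hs' : w'ᵀ = w')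
    (h : (lagSub w : Set (Fin n → ℂ)) = lagSub w') : w = w' := by
  have key : ∀ z, conjMap w z = conjMap w' z := by
    intro z
    set a := (2⁻¹ : ℝ) • (z + conjMap w z) with ha_def
    set b := (2⁻¹ : ℝ) • (z - conjMap w z) with hb_def
    have hab : z = a + b := by
      rw [ha_def, hb_def, ← smul_add]
      have h3 : z + conjMap w z + (z - conjMap w z) = (2 : ℝ) • z := by
        rw [two_smul]; abel
      rw [h3, smul_smul]
      norm_num
    have ha : a ∈ lagSub w := mem_pos_part hw hs z
    have hb : b ∈ lagSubNeg w := mem_neg_part hw hs z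
    have hc : Complex.I • b ∈ lagSub w := smul_I_mem_pos hb
    have ha' : a ∈ lagSub w' := by rw [← SetLike.mem_coe, ← h]; exact ha
    have hc' : Complex.I • b ∈ lagSub w' := by rw [← SetLike.mem_coe, ← h]; exact hc
    have hfa : conjMap w a = a := (mem_lagSub.mp ha).symm
    have hfb : conjMap w b = -b := mem_lagSubNeg.mp hb
    have hfa' : conjMap w' a = a := (mem_lagSub.mp ha').symm
    have hfcb : conjMap w' (Complex.I • b) = Complex.I • b := (mem_lagSub.mp hc').symm
    have hfb' : conjMap w' b = -b := by
      have hsb : star b = Complex.I • star (Complex.I • b) := by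
        rw [star_I_smul, smul_smul, mul_neg, Complex.I_mul_I, neg_neg, one_smul]
      rw [conjMap_apply, hsb, mulVec_smul, ← conjMap_apply, hfcb, smul_smul,
        Complex.I_mul_I, neg_one_smul]
    calc conjMap w z = conjMap w a + conjMap w b := by rw [hab, map_add]
      _ = a - b := by rw [hfa, hfb, sub_eq_add_neg]
      _ = conjMap w' a + conjMap w' b := by rw [hfa', hfb', sub_eq_add_neg]
      _ = conjMap w' z := by rw [← map_add, ← hab]
  have hmv : ∀ v, w *ᵥ v = w' *ᵥ v := by
    intro v
    have h2 := key (star v)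
    rwa [conjMap_apply, conjMap_apply, star_star] at h2
  have : Matrix.toLin' w = Matrix.toLin' w' := by
    apply LinearMap.ext
    intro v
    rw [Matrix.toLin'_apply, Matrix.toLin'_apply]
    exact hmv v
  exact Matrix.toLin'.injective this

end WSym

section UuT

variable {u : Matrix (Fin n) (Fin n) ℂ}

lemma star_transpose' (M : Matrix (Fin n) (Fin n) ℂ) : (star M)ᵀ = star (Mᵀ) := by
  ext i j
  simp [Matrix.star_apply, Matrix.transpose_apply]

lemma transpose_mem_unitary (hu : u ∈ Matrix.unitaryGroup (Fin n) ℂ) :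
    uᵀ ∈ Matrix.unitaryGroup (Fin n) ℂ := by
  rw [Matrix.mem_unitaryGroup_iff']
  rw [← star_transpose', ← Matrix.transpose_mul, Matrix.mem_unitaryGroup_iff.mp hu,
    Matrix.transpose_one]

lemma uuT_mem_unitary (hu : u ∈ Matrix.unitaryGroup (Fin n) ℂ) :
    u * uᵀ ∈ Matrix.unitaryGroup (Fin n) ℂ :=
  mul_mem hu (transpose_mem_unitary hu)

lemma uuT_symm : (u * uᵀ)ᵀ = u * uᵀ := by
  rw [Matrix.transpose_mul, Matrix.transpose_transpose]

lemma star_eq_self_of_L0 {x : Fin n → ℂ} (hx : x ∈ L0set n) : star x = x := by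
  funext i
  exact Complex.conj_eq_iff_im.mpr (hx i)

lemma lagSub_uuT (hu : u ∈ Matrix.unitaryGroup (Fin n) ℂ) :
    (lagSub (u * uᵀ) : Set (Fin n → ℂ)) = (fun z => u.mulVec z) '' L0set n := by
  ext z
  simp only [SetLike.mem_coe, mem_lagSub, Set.mem_image]
  constructor
  · intro hz
    refine ⟨star u *ᵥ z, ?_, ?_⟩
    · have hx : star (star u *ᵥ z) = star u *ᵥ z := by
        rw [star_mulVec', star_star]
        conv_rhs => rw [hz]
        rw [mulVec_mulVec, ← mul_assoc, Matrix.mem_unitaryGroup_iff'.mp hu, one_mul]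
      intro i
      exact Complex.conj_eq_iff_im.mp (congrFun hx i)
    · rw [mulVec_mulVec, Matrix.mem_unitaryGroup_iff.mp hu, one_mulVec]
  · rintro ⟨x, hx, rfl⟩
    have hsx : star x = x := star_eq_self_of_L0 hx
    rw [star_mulVec', hsx, mulVec_mulVec]
    congr 1
    rw [mul_assoc]
    have : uᵀ * (star u)ᵀ = (star u * u)ᵀ := by rw [← Matrix.transpose_mul]
    rw [this, Matrix.mem_unitaryGroup_iff'.mp hu, Matrix.transpose_one, mul_one]

end UuT

section Exists

/-- `ℂⁿ` with its `L²` structure, an inner product space over `ℝ`. -/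
abbrev Pn (n : ℕ) := PiLp 2 (fun _ : Fin n => ℂ)

lemma mulVec_of_cols (e : Fin n → (Fin n → ℂ)) (x : Fin n → ℂ) :
    (Matrix.of fun i j => e j i) *ᵥ x = ∑ j, x j • e j := by
  funext i
  rw [mulVec, dotProduct]
  rw [Finset.sum_apply]
  refine Finset.sum_congr rfl fun j _ => ?_
  rw [Pi.smul_apply, smul_eq_mul, Matrix.of_apply, mul_comm]

lemma unitary_of_cols (e : Fin n → (Fin n → ℂ))
    (h : ∀ j k, hermP (e j) (e k) = if j = k then 1 else 0) :
    (Matrix.of fun i j => e j i) ∈ Matrix.unitaryGroup (Fin n) ℂ := by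
  rw [Matrix.mem_unitaryGroup_iff']
  ext j k
  have h2 : hermP (e k) (e j) = if j = k then 1 else 0 := by
    rw [← conj_hermP, h j k]
    by_cases hjk : j = k <;> simp [hjk]
  calc (star (Matrix.of fun i j => e j i) * (Matrix.of fun i j => e j i)) j k
      = ∑ i, (starRingEnd ℂ) (e j i) * e k i := by
        rw [Matrix.mul_apply]
        refine Finset.sum_congr rfl fun i _ => ?_
        rw [Matrix.star_eq_conjTranspose, Matrix.conjTranspose_apply, Matrix.of_apply,
          Matrix.of_apply]
        rfl
    _ = hermP (e k) (e j) := by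
        rw [hermP]
        exact Finset.sum_congr rfl fun i _ => mul_comm _ _
    _ = (1 : Matrix (Fin n) (Fin n) ℂ) j k := by
        rw [h2, Matrix.one_apply]

lemma exists_unitary_of_lagrangian (L : Submodule ℝ (Fin n → ℂ)) (hL : IsLagrangian L) :
    ∃ u : Matrix (Fin n) (Fin n) ℂ, u ∈ Matrix.unitaryGroup (Fin n) ℂ ∧
      (fun z => u.mulVec z) '' L0set n = (L : Set (Fin n → ℂ)) := by
  classical
  let L' : Submodule ℝ (Pn n) := L.comap (WithLp.linearEquiv 2 ℝ (Fin n → ℂ)).toLinearMap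
  have hrank : Module.finrank ℝ L' = n := by
    have := LinearEquiv.finrank_map_eq (WithLp.linearEquiv 2 ℝ (Fin n → ℂ)).symm L
    rw [← Submodule.comap_equiv_eq_map_symm] at this; exact this.trans hL.2
  let B : OrthonormalBasis (Fin n) ℝ L' :=
    (stdOrthonormalBasis ℝ L').reindex (finCongr hrank)
  let e : Fin n → (Fin n → ℂ) := fun j => ((B j : Pn n) : Fin n → ℂ)
  have he_mem : ∀ j, e j ∈ L := fun j => (B j).2
  have herm : ∀ j k, hermP (e j) (e k) = if j = k then 1 else 0 := by
    intro j k
    have hB := B.orthonormal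
    rw [orthonormal_iff_ite] at hB
    have h1 := hB j k
    rw [Submodule.coe_inner, PiLp.inner_apply] at h1
    have hre : (hermP (e j) (e k)).re = if j = k then 1 else 0 := by
      rw [← h1, hermP, Complex.re_sum]
      refine Finset.sum_congr rfl fun i _ => ?_
      rw [Complex.inner]
      simp only [Complex.mul_re, Complex.conj_re, Complex.conj_im]
      ring
    have him : (hermP (e j) (e k)).im = 0 := by
      have h0 := hL.1 (e j) (he_mem j) (e k) (he_mem k)
      rw [omegaP] at h0
      linarith
    apply Complex.ext
    · rw [hre]
      by_cases hjk : j = k <;> simp [hjk]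
    · rw [him]
      by_cases hjk : j = k <;> simp [hjk]
  refine ⟨Matrix.of fun i j => e j i, unitary_of_cols e herm, ?_⟩
  apply Set.eq_of_subset_of_subset
  · rintro z ⟨x, hx, rfl⟩
    simp only [SetLike.mem_coe]
    rw [mulVec_of_cols]
    refine Submodule.sum_mem L fun j _ => ?_
    have hxj : x j • e j = (x j).re • e j := by
      funext i
      rw [Pi.smul_apply, Pi.smul_apply, smul_eq_mul, Complex.real_smul]
      congr 1
      exact (Complex.conj_eq_iff_re.mp (Complex.conj_eq_iff_im.mpr (hx j))).symm
    rw [hxj]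
    exact Submodule.smul_mem L _ (he_mem j)
  · intro z hz
    have hz' : WithLp.toLp 2 z ∈ L' := hz
    set zz : L' := ⟨WithLp.toLp 2 z, hz'⟩ with hzz
    have hrepr : ∑ j, B.toBasis.repr zz j • B.toBasis j = zz := B.toBasis.sum_repr zz
    refine ⟨fun j => ((B.toBasis.repr zz j : ℝ) : ℂ), fun i => Complex.ofReal_im _, ?_⟩
    simp only
    rw [mulVec_of_cols]
    have hval := congrArg (Subtype.val) hrepr
    rw [Submodule.coe_sum] at hval
    have : ∑ j, ((B.toBasis.repr zz j : ℝ) : ℂ) • e j = z := by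
      have hval' : (zz : Fin n → ℂ) = z := rfl
      rw [← hval', ← hval, WithLp.ofLp_sum]
      refine Finset.sum_congr rfl fun j _ => ?_
      rw [Submodule.coe_smul, OrthonormalBasis.coe_toBasis, WithLp.ofLp_smul]
      funext i
      rw [Pi.smul_apply, Pi.smul_apply, smul_eq_mul, Complex.real_smul]
    rw [this]

end Exists

end Stmt6Aux


open Stmt6Aux in
/-- `w ↦ L_w = {z : z - w z̄ = 0}` is a bijection from the set
`W(n) = {w ∈ U(n) : wᵀ = w}` of symmetric unitary matrices onto the set of Lagrangian
subspaces of `ℂⁿ`; its inverse sends `L = u(L₀)` (for any unitary `u`) to `u uᵀ`. -/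
theorem stmt_6 (n : ℕ) :
    (∀ w : Matrix (Fin n) (Fin n) ℂ, w ∈ Matrix.unitaryGroup (Fin n) ℂ → wᵀ = w →
      ∃ L : Submodule ℝ (Fin n → ℂ), IsLagrangian L ∧
        (L : Set (Fin n → ℂ)) = {z | z - w.mulVec (fun i => (starRingEnd ℂ) (z i)) = 0}) ∧
    (∀ w w' : Matrix (Fin n) (Fin n) ℂ,
      w ∈ Matrix.unitaryGroup (Fin n) ℂ → wᵀ = w →
      w' ∈ Matrix.unitaryGroup (Fin n) ℂ → w'ᵀ = w' →
      {z : Fin n → ℂ | z - w.mulVec (fun i => (starRingEnd ℂ) (z i)) = 0} =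
        {z : Fin n → ℂ | z - w'.mulVec (fun i => (starRingEnd ℂ) (z i)) = 0} → w = w') ∧
    (∀ L : Submodule ℝ (Fin n → ℂ), IsLagrangian L →
      ∃ w : Matrix (Fin n) (Fin n) ℂ, w ∈ Matrix.unitaryGroup (Fin n) ℂ ∧ wᵀ = w ∧
        (L : Set (Fin n → ℂ)) = {z | z - w.mulVec (fun i => (starRingEnd ℂ) (z i)) = 0} ∧
        ∀ u : Matrix (Fin n) (Fin n) ℂ, u ∈ Matrix.unitaryGroup (Fin n) ℂ →
          (fun z => u.mulVec z) '' L0set n = (L : Set (Fin n → ℂ)) → w = u * uᵀ) := by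
  refine ⟨?_, ?_, ?_⟩
  · intro w hw hs
    exact ⟨lagSub w, lagSub_isLagrangian hw hs, lagSub_coe w⟩
  · intro w w' hw hs hw' hs' hset
    apply lagSub_injective hw hs hw' hs'
    rw [lagSub_coe, lagSub_coe]
    exact hset
  · intro L hL
    obtain ⟨u₀, hu₀, himg⟩ := exists_unitary_of_lagrangian L hL
    refine ⟨u₀ * u₀ᵀ, uuT_mem_unitary hu₀, uuT_symm, ?_, ?_⟩
    · rw [← lagSub_coe, lagSub_uuT hu₀, himg]
    · intro u hu himg'
      apply lagSub_injective (uuT_mem_unitary hu₀) uuT_symm (uuT_mem_unitary hu) uuT_symm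
      rw [lagSub_uuT hu₀, lagSub_uuT hu, himg, himg']
end

section
/- For u, v ∈ U(n), the matrices uᵗu and vᵗv have the same spectrum (are conjugate in U(n)) if and only if there exist k₁, k₂ ∈ O(n) with v = k₁ u k₂⁻¹. -/
open Matrix Module LinearMap Polynomial

namespace Stmt11Aux

variable {n : ℕ}

/-- Complexification of a real matrix. -/
noncomputable def cM (A : Matrix (Fin n) (Fin n) ℝ) : Matrix (Fin n) (Fin n) ℂ :=
  A.map (fun x : ℝ => (x : ℂ))

lemma cM_apply (A : Matrix (Fin n) (Fin n) ℝ) (i j : Fin n) : cM A i j = (A i j : ℂ) := rfl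

lemma cM_mul (A B : Matrix (Fin n) (Fin n) ℝ) : cM (A * B) = cM A * cM B := by
  ext i j
  simp [cM, Matrix.mul_apply]

lemma cM_one : cM (1 : Matrix (Fin n) (Fin n) ℝ) = 1 := by
  ext i j
  by_cases h : i = j <;> simp [cM, Matrix.one_apply, h]

lemma cM_transpose (A : Matrix (Fin n) (Fin n) ℝ) : (cM A)ᵀ = cM Aᵀ := by
  ext i j; rfl

lemma cM_injective : Function.Injective (cM (n := n)) := by
  intro A B h
  ext i j
  have h2 := congrFun (congrFun h i) j
  rw [cM_apply, cM_apply] at h2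
  exact_mod_cast h2

lemma cM_diagonal (d : Fin n → ℝ) :
    cM (diagonal d) = diagonal (fun i => (d i : ℂ)) := by
  ext i j
  by_cases h : i = j <;> simp [cM, diagonal, h]

lemma star_cM (A : Matrix (Fin n) (Fin n) ℝ) : star (cM A) = (cM A)ᵀ := by
  ext i j
  simp [cM, Matrix.star_eq_conjTranspose, Matrix.conjTranspose_apply]

lemma mem_orthogonal_of (A : Matrix (Fin n) (Fin n) ℝ) (h : Aᵀ * A = 1) :
    A ∈ Matrix.orthogonalGroup (Fin n) ℝ := by
  rw [Matrix.mem_orthogonalGroup_iff']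
  exact h

/-- rewrite helper -/
lemma mul_mul_of_eq {A B C D : Matrix (Fin n) (Fin n) ℂ} (h : A * B = C * D) :
    ∀ Z, A * (B * Z) = C * (D * Z) := by
  intro Z
  rw [← Matrix.mul_assoc, h, Matrix.mul_assoc]

lemma cancel_left {A B : Matrix (Fin n) (Fin n) ℂ} (h : A * B = 1) :
    ∀ Z, A * (B * Z) = Z := by
  intro Z
  rw [← Matrix.mul_assoc, h, Matrix.one_mul]


theorem joint_diag (n : ℕ) (X Y : Matrix (Fin n) (Fin n) ℝ)
    (hX : Xᵀ = X) (hY : Yᵀ = Y) (hXY : X * Y = Y * X) :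
    ∃ (O : Matrix (Fin n) (Fin n) ℝ) (α β : Fin n → ℝ),
      Oᵀ * O = 1 ∧ X * O = O * diagonal α ∧ Y * O = O * diagonal β := by
  classical
  let A : EuclideanSpace ℝ (Fin n) →ₗ[ℝ] EuclideanSpace ℝ (Fin n) := Matrix.toEuclideanLin X
  let B : EuclideanSpace ℝ (Fin n) →ₗ[ℝ] EuclideanSpace ℝ (Fin n) := Matrix.toEuclideanLin Y
  have hXh : X.IsHermitian := by
    rw [Matrix.IsHermitian, Matrix.conjTranspose_eq_transpose_of_trivial, hX]
  have hYh : Y.IsHermitian := by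
    rw [Matrix.IsHermitian, Matrix.conjTranspose_eq_transpose_of_trivial, hY]
  have hA : A.IsSymmetric := Matrix.isHermitian_iff_isSymmetric.1 hXh
  have hB : B.IsSymmetric := Matrix.isHermitian_iff_isSymmetric.1 hYh
  have hAB : Commute A B := by
    have h1 : ∀ (M N : Matrix (Fin n) (Fin n) ℝ),
        Matrix.toEuclideanLin M ∘ₗ Matrix.toEuclideanLin N = Matrix.toEuclideanLin (M * N) := by
      intro M N
      ext v
      simp [Matrix.toEuclideanLin_apply, Matrix.mulVec_mulVec]
    show A * B = B * A
    have : A * B = A ∘ₗ B := rfl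
    rw [this, h1, hXY, ← h1]; rfl
  set V : ℝ × ℝ → Submodule ℝ (EuclideanSpace ℝ (Fin n)) := fun i => Module.End.eigenspace A i.2 ⊓ Module.End.eigenspace B i.1 with hV
  have hInt : DirectSum.IsInternal V := hA.directSum_isInternal_of_commute hB hAB
  have hOF : OrthogonalFamily ℝ (fun i => (V i : Submodule ℝ (EuclideanSpace ℝ (Fin n)))) (fun i => (V i).subtypeₗᵢ) :=
    hA.orthogonalFamily_eigenspace_inf_eigenspace hB
  have hInt' : DirectSum.IsInternal (fun i : {p : ℝ × ℝ // V p ≠ ⊥} => V i) :=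
    DirectSum.isInternal_ne_bot_iff.2 hInt
  haveI : Fintype {p : ℝ × ℝ // V p ≠ ⊥} :=
    hInt.submodule_iSupIndep.fintypeNeBotOfFiniteDimensional
  have hOF' : OrthogonalFamily ℝ (fun i : {p : ℝ × ℝ // V p ≠ ⊥} => (V i : Submodule ℝ (EuclideanSpace ℝ (Fin n))))
      (fun i => (V i).subtypeₗᵢ) := hOF.comp Subtype.coe_injective
  have hn : Module.finrank ℝ (EuclideanSpace ℝ (Fin n)) = n := finrank_euclideanSpace_fin
  let b : OrthonormalBasis (Fin n) ℝ (EuclideanSpace ℝ (Fin n)) := hInt'.subordinateOrthonormalBasis hn hOF'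
  let idx : Fin n → {p : ℝ × ℝ // V p ≠ ⊥} := fun j => hInt'.subordinateOrthonormalBasisIndex hn j hOF'
  have hmem : ∀ j, b j ∈ V (idx j : ℝ × ℝ) :=
    fun j => hInt'.subordinateOrthonormalBasis_subordinate hn j hOF'
  set α : Fin n → ℝ := fun j => (idx j : ℝ × ℝ).2 with hα
  set β : Fin n → ℝ := fun j => (idx j : ℝ × ℝ).1 with hβ
  have hXb : ∀ j, X.mulVec (b j) = α j • (b j : EuclideanSpace ℝ (Fin n)) := by
    intro j
    have := Module.End.mem_eigenspace_iff.1 (hmem j).1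
    have h2 : A (b j) = α j • b j := this
    simpa [A, Matrix.toEuclideanLin_apply] using congrArg WithLp.ofLp h2
  have hYb : ∀ j, Y.mulVec (b j) = β j • (b j : EuclideanSpace ℝ (Fin n)) := by
    intro j
    have := Module.End.mem_eigenspace_iff.1 (hmem j).2
    have h2 : B (b j) = β j • b j := this
    simpa [B, Matrix.toEuclideanLin_apply] using congrArg WithLp.ofLp h2
  have key : ∀ (M : Matrix (Fin n) (Fin n) ℝ) (γ : Fin n → ℝ),
      (∀ j, M.mulVec (b j) = γ j • (b j : EuclideanSpace ℝ (Fin n))) →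
      M * Matrix.of (fun i j => b j i) = Matrix.of (fun i j => b j i) * diagonal γ := by
    intro M γ hMb
    ext i j
    have h := congrFun (hMb j) i
    simp only [Matrix.mulVec, dotProduct, PiLp.smul_apply, smul_eq_mul] at h
    rw [Matrix.mul_diagonal]
    simp only [Matrix.mul_apply, Matrix.of_apply]
    rw [h]
    simp [mul_comm]
  refine ⟨Matrix.of (fun i j => b j i), α, β, ?_, key X α hXb, key Y β hYb⟩
  ext i j
  have := orthonormal_iff_ite.mp b.orthonormal i j
  have h2 : (inner ℝ (b i) (b j) : ℝ) = ∑ k, b i k * b j k := by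
    simp [PiLp.inner_apply, mul_comm]
  rw [h2] at this
  simp only [Matrix.mul_apply, Matrix.transpose_apply, Matrix.of_apply, Matrix.one_apply]
  exact this


/-- A matrix that is both unitary and complex-orthogonal is real. -/
lemma real_of_unitary_orthogonal {A : Matrix (Fin n) (Fin n) ℂ}
    (h1 : A * star A = 1) (h2 : Aᵀ * A = 1) :
    ∃ B : Matrix (Fin n) (Fin n) ℝ, A = cM B := by
  have hstar : star A = Aᵀ := by
    calc star A = 1 * star A := (Matrix.one_mul _).symm
    _ = (Aᵀ * A) * star A := by rw [h2]
    _ = Aᵀ * (A * star A) := Matrix.mul_assoc _ _ _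
    _ = Aᵀ := by rw [h1, Matrix.mul_one]
  have hentries : ∀ i j, (starRingEnd ℂ) (A i j) = A i j := by
    intro i j
    have := congrFun (congrFun hstar j) i
    simpa [Matrix.star_eq_conjTranspose, Matrix.conjTranspose_apply] using this
  refine ⟨Matrix.of (fun i j => (A i j).re), ?_⟩
  ext i j
  have h3 := (Complex.conj_eq_iff_re).1 (hentries i j)
  rw [cM_apply, Matrix.of_apply, h3]

/-- Takagi decomposition for symmetric unitary matrices. -/
lemma takagi {S : Matrix (Fin n) (Fin n) ℂ}
    (hsym : Sᵀ = S) (hun : S * star S = 1) :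
    ∃ (O : Matrix (Fin n) (Fin n) ℝ) (d : Fin n → ℂ),
      Oᵀ * O = 1 ∧ S = (cM O) * diagonal d * (cM O)ᵀ := by
  classical
  set T : Matrix (Fin n) (Fin n) ℂ := star S with hT
  have hT' : ∀ i j, T i j = (starRingEnd ℂ) (S i j) := by
    intro i j
    rw [hT, Matrix.star_eq_conjTranspose, Matrix.conjTranspose_apply]
    rw [show S j i = S i j from congrFun (congrFun hsym i) j]
    rw [starRingEnd_apply]
  -- real and imaginary parts
  set X : Matrix (Fin n) (Fin n) ℝ := Matrix.of (fun i j => (S i j).re) with hX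
  set Y : Matrix (Fin n) (Fin n) ℝ := Matrix.of (fun i j => (S i j).im) with hY
  have hcX : cM X = (2⁻¹ : ℂ) • (S + T) := by
    ext i j
    rw [cM_apply]
    simp only [Matrix.smul_apply, Matrix.add_apply, hT' i j, hX, Matrix.of_apply]
    rw [Complex.add_conj, smul_eq_mul]
    push_cast
    ring
  have hcY : cM Y = (-(2⁻¹ : ℂ) * Complex.I) • (S - T) := by
    ext i j
    rw [cM_apply]
    simp only [Matrix.smul_apply, Matrix.sub_apply, hT' i j, hY, Matrix.of_apply]
    rw [Complex.sub_conj, smul_eq_mul]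
    push_cast
    linear_combination ((S i j).im : ℂ) * Complex.I_sq
  have hST : S * T = T * S := by
    rw [hun, mul_eq_one_comm.mp hun]
  have hSdec : S = cM X + Complex.I • cM Y := by
    ext i j
    simp only [Matrix.add_apply, Matrix.smul_apply, cM_apply, hX, hY, Matrix.of_apply,
      smul_eq_mul]
    rw [mul_comm]
    exact (Complex.re_add_im (S i j)).symm
  have hXs : Xᵀ = X := by
    ext i j
    simp only [Matrix.transpose_apply, hX, Matrix.of_apply]
    rw [show S j i = S i j from congrFun (congrFun hsym i) j]
  have hYs : Yᵀ = Y := by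
    ext i j
    simp only [Matrix.transpose_apply, hY, Matrix.of_apply]
    rw [show S j i = S i j from congrFun (congrFun hsym i) j]
  have hcomm : X * Y = Y * X := by
    apply cM_injective
    rw [cM_mul, cM_mul, hcX, hcY]
    rw [Matrix.smul_mul, Matrix.mul_smul, Matrix.smul_mul, Matrix.mul_smul, smul_smul, smul_smul]
    rw [mul_comm ((2:ℂ)⁻¹) (-(2⁻¹ : ℂ) * Complex.I)]
    congr 1
    have e1 : (S + T) * (S - T) = S * S - T * T := by
      rw [add_mul, mul_sub, mul_sub, hST]
      abel
    have e2 : (S - T) * (S + T) = S * S - T * T := by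
      rw [sub_mul, mul_add, mul_add, hST]
      abel
    rw [e1, e2]
  obtain ⟨O, α, β, hO, hXO, hYO⟩ := joint_diag n X Y hXs hYs hcomm
  have hOOt : O * Oᵀ = 1 := mul_eq_one_comm.mp hO
  have hXeq : X = O * diagonal α * Oᵀ := by
    calc X = X * (O * Oᵀ) := by rw [hOOt, Matrix.mul_one]
    _ = (X * O) * Oᵀ := by rw [Matrix.mul_assoc]
    _ = O * diagonal α * Oᵀ := by rw [hXO]
  have hYeq : Y = O * diagonal β * Oᵀ := by
    calc Y = Y * (O * Oᵀ) := by rw [hOOt, Matrix.mul_one]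
    _ = (Y * O) * Oᵀ := by rw [Matrix.mul_assoc]
    _ = O * diagonal β * Oᵀ := by rw [hYO]
  refine ⟨O, fun i => (α i : ℂ) + Complex.I * (β i : ℂ), hO, ?_⟩
  rw [hSdec, hXeq, hYeq]
  rw [cM_mul, cM_mul, cM_mul, cM_mul, cM_diagonal, cM_diagonal, cM_transpose]
  rw [← Matrix.smul_mul, ← Matrix.mul_smul]
  rw [← Matrix.add_mul, ← Matrix.mul_add]
  congr 2
  ext i j
  by_cases h : i = j <;>
    simp [Matrix.diagonal_apply, h, Matrix.smul_apply]



lemma charpoly_conj_inv {P Q M : Matrix (Fin n) (Fin n) ℂ} (h : P * Q = 1) :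
    (P * M * Q).charpoly = M.charpoly := by
  have hscalar : ∀ A : Matrix (Fin n) (Fin n) ℂ[X],
      A * Matrix.scalar (Fin n) (X : ℂ[X]) = Matrix.scalar (Fin n) (X : ℂ[X]) * A := by
    intro A
    ext i j
    simp [Matrix.scalar, Matrix.mul_diagonal, Matrix.diagonal_mul, mul_comm]
  have hmapmul : ∀ A B : Matrix (Fin n) (Fin n) ℂ,
      (A * B).map (C : ℂ →+* ℂ[X]) = A.map (C : ℂ →+* ℂ[X]) * B.map (C : ℂ →+* ℂ[X]) := by
    intro A B
    exact Matrix.map_mul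
  have hPQ1 : P.map (C : ℂ →+* ℂ[X]) * Q.map (C : ℂ →+* ℂ[X]) = 1 := by
    rw [← hmapmul, h]
    ext i j
    by_cases hij : i = j <;> simp [Matrix.one_apply, hij]
  have hcm : charmatrix (P * M * Q)
      = P.map (C : ℂ →+* ℂ[X]) * charmatrix M * Q.map (C : ℂ →+* ℂ[X]) := by
    rw [charmatrix, charmatrix]
    simp only [RingHom.mapMatrix_apply]
    rw [Matrix.mul_sub, Matrix.sub_mul]
    congr 1
    · rw [hscalar, Matrix.mul_assoc, hPQ1, Matrix.mul_one]
    · rw [hmapmul, hmapmul]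
  rw [Matrix.charpoly, Matrix.charpoly, hcm]
  rw [Matrix.det_mul, Matrix.det_mul]
  have : (P.map (C : ℂ →+* ℂ[X])).det * (Q.map (C : ℂ →+* ℂ[X])).det = 1 := by
    rw [← Matrix.det_mul, hPQ1, Matrix.det_one]
  calc (P.map (C : ℂ →+* ℂ[X])).det * (charmatrix M).det * (Q.map (C : ℂ →+* ℂ[X])).det
      = ((P.map (C : ℂ →+* ℂ[X])).det * (Q.map (C : ℂ →+* ℂ[X])).det) * (charmatrix M).det := by
        ring
    _ = (charmatrix M).det := by rw [this, one_mul]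

lemma charpoly_diagonal (d : Fin n → ℂ) :
    (diagonal d).charpoly = ∏ i, (X - C (d i)) := by
  have : charmatrix (diagonal d) = diagonal (fun i => (X : ℂ[X]) - C (d i)) := by
    ext i j
    by_cases h : i = j
    · subst h; simp [charmatrix_apply_eq]
    · simp [charmatrix_apply_ne _ _ _ h, Matrix.diagonal_apply_ne _ h]
  rw [Matrix.charpoly, this, Matrix.det_diagonal]

lemma multiset_eq_of_prod_eq {d d' : Fin n → ℂ}
    (h : ∏ i, (X - C (d i)) = ∏ i, (X - C (d' i))) :
    Multiset.map d Finset.univ.val = Multiset.map d' Finset.univ.val := by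
  have h1 := Polynomial.roots_multiset_prod_X_sub_C (Multiset.map d Finset.univ.val)
  have h2 := Polynomial.roots_multiset_prod_X_sub_C (Multiset.map d' Finset.univ.val)
  rw [Multiset.map_map] at h1 h2
  have e1 : ((Multiset.map (fun i => X - C (d i)) Finset.univ.val)).prod
      = ∏ i, (X - C (d i)) := rfl
  have e2 : ((Multiset.map (fun i => X - C (d' i)) Finset.univ.val)).prod
      = ∏ i, (X - C (d' i)) := rfl
  rw [← h1, ← h2]
  simp only [Function.comp]
  rw [e1, e2, h]

lemma exists_perm_of_multiset_eq {γ : Type*} [DecidableEq γ] {f g : Fin n → γ}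
    (h : Multiset.map f Finset.univ.val = Multiset.map g Finset.univ.val) :
    ∃ σ : Equiv.Perm (Fin n), ∀ i, f (σ i) = g i := by
  have hcard : ∀ c : γ, Fintype.card {i // f i = c} = Fintype.card {i // g i = c} := by
    intro c
    have hc := congrArg (Multiset.count c) h
    rw [Multiset.count_map, Multiset.count_map] at hc
    rw [Fintype.card_subtype, Fintype.card_subtype]
    rw [Finset.card_filter, Finset.card_filter]
    simpa [eq_comm, Finset.card_def, Finset.filter_val] using hc
  have e : ∀ c : γ, {i // f i = c} ≃ {i // g i = c} := fun c => Fintype.equivOfCardEq (hcard c)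
  refine ⟨(Equiv.ofFiberEquiv e).symm, fun i => ?_⟩
  have := Equiv.ofFiberEquiv_map e ((Equiv.ofFiberEquiv e).symm i)
  rw [Equiv.apply_symm_apply] at this
  exact this.symm

lemma mul_collect {A B C : Matrix (Fin n) (Fin n) ℂ} (h : A * B = C) :
    ∀ Z, A * (B * Z) = C * Z := by
  intro Z
  rw [← Matrix.mul_assoc, h]

lemma kak {u : Matrix (Fin n) (Fin n) ℂ} (hu : u ∈ Matrix.unitaryGroup (Fin n) ℂ) :
    ∃ (R O : Matrix (Fin n) (Fin n) ℝ) (e : Fin n → ℂ),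
      Rᵀ * R = 1 ∧ Oᵀ * O = 1 ∧ (∀ i, e i ≠ 0) ∧
      (∀ i, e i * (starRingEnd ℂ) (e i) = 1) ∧
      u = cM R * diagonal e * (cM O)ᵀ ∧
      uᵀ * u = cM O * diagonal (fun i => e i ^ 2) * (cM O)ᵀ := by
  classical
  have hu1 : star u * u = 1 := Matrix.mem_unitaryGroup_iff'.mp hu
  have hu2 : u * star u = 1 := Matrix.mem_unitaryGroup_iff.mp hu
  set S := uᵀ * u with hS
  have hSsym : Sᵀ = S := by
    rw [hS, Matrix.transpose_mul, Matrix.transpose_transpose]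
  have hstarS : star S = star u * (star u)ᵀ := by
    rw [hS, StarMul.star_mul,
      show star (uᵀ) = (star u)ᵀ from by
        ext i j
        rfl]
  have hSun : S * star S = 1 := by
    rw [hstarS, hS]
    simp only [Matrix.mul_assoc]
    rw [cancel_left hu2]
    rw [← Matrix.transpose_mul, hu1, Matrix.transpose_one]
  obtain ⟨O, δ, hO, hSdec⟩ := takagi hSsym hSun
  set cO := cM O with hcOdef
  have hcO : cOᵀ * cO = 1 := by
    rw [hcOdef, cM_transpose, ← cM_mul, hO, cM_one]
  have hcO' : cO * cOᵀ = 1 := mul_eq_one_comm.mp hcO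
  -- diagonal δ is unitary
  have hcOmem : cO ∈ Matrix.unitaryGroup (Fin n) ℂ := by
    rw [Matrix.mem_unitaryGroup_iff']
    rw [star_cM]
    exact hcO
  have hSmem : S ∈ Matrix.unitaryGroup (Fin n) ℂ := Matrix.mem_unitaryGroup_iff.mpr hSun
  have hD : diagonal δ = star cO * S * cO := by
    rw [star_cM, hSdec]
    show diagonal δ = cOᵀ * (cO * diagonal δ * cOᵀ) * cO
    simp only [Matrix.mul_assoc]
    rw [hcO, Matrix.mul_one, cancel_left hcO]
  have hD2 : diagonal δ = cOᵀ * S * cO := by rw [hD, star_cM]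
  have hstarcOt : star (cOᵀ) = cO := by
    rw [hcOdef, cM_transpose, star_cM, cM_transpose, Matrix.transpose_transpose]
  have hDstar : star (diagonal δ) = cOᵀ * (star S * cO) := by
    rw [hD2, StarMul.star_mul, StarMul.star_mul, hstarcOt, star_cM]
  have hDun : diagonal δ * star (diagonal δ) = 1 := by
    rw [hDstar]
    nth_rewrite 1 [hD2]
    simp only [Matrix.mul_assoc]
    rw [cancel_left hcO', cancel_left hSun, hcO]
  have hδconj : ∀ i, δ i * (starRingEnd ℂ) (δ i) = 1 := by
    intro i
    have h1 : star (diagonal δ) = diagonal (fun i => (starRingEnd ℂ) (δ i)) := by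
      rw [Matrix.star_eq_conjTranspose, Matrix.diagonal_conjTranspose]
      rfl
    rw [h1, Matrix.diagonal_mul_diagonal] at hDun
    have := congrFun (congrFun hDun i) i
    simpa [Matrix.diagonal_apply_eq, Matrix.one_apply] using this
  have hδne : ∀ i, δ i ≠ 0 := fun i => left_ne_zero_of_mul_eq_one (hδconj i)
  -- square roots
  have hsq : ∀ i, ∃ z : ℂ, z ^ 2 = δ i := fun i =>
    IsAlgClosed.exists_pow_nat_eq (δ i) (by norm_num)
  choose e he using hsq
  have hene : ∀ i, e i ≠ 0 := by
    intro i
    intro h0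
    exact hδne i (by rw [← he i, h0]; ring)
  have heconj : ∀ i, e i * (starRingEnd ℂ) (e i) = 1 := by
    intro i
    have h1 : (e i * (starRingEnd ℂ) (e i)) ^ 2 = δ i * (starRingEnd ℂ) (δ i) := by
      rw [← he i]
      rw [map_pow]
      ring
    rw [hδconj i] at h1
    have h2 : e i * (starRingEnd ℂ) (e i) = (Complex.normSq (e i) : ℂ) := Complex.mul_conj _
    rw [h2] at h1 ⊢
    have h3 : (Complex.normSq (e i)) ^ 2 = 1 := by exact_mod_cast h1
    have h4 : Complex.normSq (e i) = 1 := by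
      nlinarith [Complex.normSq_nonneg (e i)]
    rw [h4]
    norm_num
  -- the orthogonal-and-unitary factor
  set K := u * cO * diagonal (fun i => (e i)⁻¹) with hK
  have hKt : Kᵀ = diagonal (fun i => (e i)⁻¹) * (cOᵀ * uᵀ) := by
    rw [hK, Matrix.transpose_mul, Matrix.transpose_mul, Matrix.diagonal_transpose]

  have hSO : S * cO = cO * diagonal δ := by
    rw [hSdec]
    simp only [Matrix.mul_assoc]
    rw [hcO, Matrix.mul_one]
  have hdiaginv : diagonal (fun i => (e i)⁻¹) * diagonal e = 1 := by
    rw [Matrix.diagonal_mul_diagonal]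
    ext i j
    by_cases hij : i = j
    · subst hij
      simp [Matrix.diagonal_apply_eq, inv_mul_cancel₀ (hene i)]
    · simp [Matrix.diagonal_apply_ne _ hij, Matrix.one_apply_ne hij]
  have hKort : Kᵀ * K = 1 := by
    rw [hKt, hK]
    simp only [Matrix.mul_assoc]
    rw [mul_collect (hS.symm), mul_mul_of_eq hSO, cancel_left hcO]
    rw [Matrix.diagonal_mul_diagonal, Matrix.diagonal_mul_diagonal]
    ext i j
    by_cases hij : i = j
    · subst hij
      have hval : (e i)⁻¹ * (δ i * (e i)⁻¹) = 1 := by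
        rw [← he i, sq]
        field_simp
        exact div_self (hene i)
      simp [Matrix.diagonal_apply_eq, hval]
    · simp [Matrix.diagonal_apply_ne _ hij, Matrix.one_apply_ne hij]
  have hstarK : star K = diagonal (fun i => (starRingEnd ℂ) ((e i)⁻¹)) * (cOᵀ * star u) := by
    rw [hK, StarMul.star_mul, StarMul.star_mul, star_cM]
    rw [show star (diagonal fun i => (e i)⁻¹) = diagonal (fun i => (starRingEnd ℂ) ((e i)⁻¹)) from by
      rw [Matrix.star_eq_conjTranspose, Matrix.diagonal_conjTranspose]; rfl]
  have hKun : K * star K = 1 := by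
    rw [hK, hstarK]
    simp only [Matrix.mul_assoc]
    have hdd : ∀ Z, diagonal (fun i => (e i)⁻¹) *
        (diagonal (fun i => (starRingEnd ℂ) ((e i)⁻¹)) * Z) = Z := by
      apply cancel_left
      rw [Matrix.diagonal_mul_diagonal]
      ext i j
      by_cases hij : i = j
      · subst hij
        have hval : (e i)⁻¹ * ((starRingEnd ℂ) (e i))⁻¹ = 1 := by
          rw [← mul_inv, heconj i, inv_one]
        simp [Matrix.diagonal_apply_eq, hval]
      · simp [Matrix.diagonal_apply_ne _ hij, Matrix.one_apply_ne hij]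
    rw [hdd, cancel_left hcO', hu2]
  obtain ⟨R, hR⟩ := real_of_unitary_orthogonal hKun hKort
  have hRort : Rᵀ * R = 1 := by
    apply cM_injective
    rw [cM_mul, ← cM_transpose, ← hR, cM_one, hKort]
  refine ⟨R, O, e, hRort, hO, hene, heconj, ?_, ?_⟩
  · rw [← hR, hK]
    simp only [Matrix.mul_assoc]
    rw [mul_collect hdiaginv, Matrix.one_mul, hcO', Matrix.mul_one]
  · show S = _
    rw [hSdec]
    congr 2
    rw [show δ = fun i => e i ^ 2 from funext fun i => (he i).symm]
lemma mem_orthogonal_iff (A : Matrix (Fin n) (Fin n) ℝ) :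
    A ∈ Matrix.orthogonalGroup (Fin n) ℝ ↔ Aᵀ * A = 1 := by
  rw [Matrix.mem_orthogonalGroup_iff']

lemma ort_mul {A B : Matrix (Fin n) (Fin n) ℝ} (hA : Aᵀ * A = 1) (hB : Bᵀ * B = 1) :
    (A * B)ᵀ * (A * B) = 1 := by
  rw [Matrix.transpose_mul]
  calc Bᵀ * Aᵀ * (A * B) = Bᵀ * ((Aᵀ * A) * B) := by simp only [Matrix.mul_assoc]
  _ = Bᵀ * B := by rw [hA, Matrix.one_mul]
  _ = 1 := hB

lemma ort_transpose {A : Matrix (Fin n) (Fin n) ℝ} (hA : Aᵀ * A = 1) :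
    (Aᵀ)ᵀ * Aᵀ = 1 := by
  rw [Matrix.transpose_transpose]
  exact mul_eq_one_comm.mp hA

end Stmt11Aux

open Matrix Stmt11Aux in
/-- For unitary `u, v`, the matrices `uᵀu` and `vᵀv` are conjugate in `U(n)`
iff `v = k₁ u k₂⁻¹` for some real orthogonal `k₁, k₂`. -/
theorem stmt_11 (n : ℕ) (u v : Matrix (Fin n) (Fin n) ℂ)
    (hu : u ∈ Matrix.unitaryGroup (Fin n) ℂ) (hv : v ∈ Matrix.unitaryGroup (Fin n) ℂ) :
    (∃ φ ∈ Matrix.unitaryGroup (Fin n) ℂ, φ * (uᵀ * u) * φ⁻¹ = vᵀ * v) ↔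
    ∃ k₁ k₂ : Matrix (Fin n) (Fin n) ℝ,
      k₁ ∈ Matrix.orthogonalGroup (Fin n) ℝ ∧ k₂ ∈ Matrix.orthogonalGroup (Fin n) ℝ ∧
      v = (k₁.map (fun x : ℝ => (x : ℂ))) * u * (k₂.map (fun x : ℝ => (x : ℂ)))⁻¹ := by
  classical
  constructor
  · rintro ⟨φ, hφ, hconj⟩
    obtain ⟨R₁, O₁, e, hR₁, hO₁, hene, heconj, hudec, huu⟩ := kak hu
    obtain ⟨R₂, O₂, f, hR₂, hO₂, hfne, hfconj, hvdec, hvv⟩ := kak hv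
    -- complexified orthogonality facts
    have hcO₁ : (cM O₁)ᵀ * cM O₁ = 1 := by rw [cM_transpose, ← cM_mul, hO₁, cM_one]
    have hcO₁' : cM O₁ * (cM O₁)ᵀ = 1 := mul_eq_one_comm.mp hcO₁
    have hcO₂ : (cM O₂)ᵀ * cM O₂ = 1 := by rw [cM_transpose, ← cM_mul, hO₂, cM_one]
    have hcO₂' : cM O₂ * (cM O₂)ᵀ = 1 := mul_eq_one_comm.mp hcO₂
    have hcR₁ : (cM R₁)ᵀ * cM R₁ = 1 := by rw [cM_transpose, ← cM_mul, hR₁, cM_one]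
    have hcR₂ : (cM R₂)ᵀ * cM R₂ = 1 := by rw [cM_transpose, ← cM_mul, hR₂, cM_one]
    -- the inverse of φ
    have hφ2 : φ * star φ = 1 := Matrix.mem_unitaryGroup_iff.mp hφ
    have hφinv : φ⁻¹ = star φ := Matrix.inv_eq_right_inv hφ2
    have hφr : φ * φ⁻¹ = 1 := by rw [hφinv]; exact hφ2
    have hφl : φ⁻¹ * φ = 1 := mul_eq_one_comm.mp hφr
    -- conjugating matrices
    set P := (cM O₂)ᵀ * φ * cM O₁ with hP
    set Q := (cM O₁)ᵀ * φ⁻¹ * cM O₂ with hQ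
    have hPQ : P * Q = 1 := by
      rw [hP, hQ]
      simp only [Matrix.mul_assoc]
      rw [cancel_left hcO₁', cancel_left hφr, hcO₂]
    have hDD : diagonal (fun i => f i ^ 2) = P * diagonal (fun i => e i ^ 2) * Q := by
      have h1 : (cM O₂)ᵀ * (vᵀ * v) * cM O₂ = diagonal (fun i => f i ^ 2) := by
        rw [hvv]
        simp only [Matrix.mul_assoc]
        rw [cancel_left hcO₂, hcO₂, Matrix.mul_one]
      rw [← h1, ← hconj, huu, hP, hQ]
      simp only [Matrix.mul_assoc]
    have hchar : ∏ i, (X - C (e i ^ 2)) = ∏ i, (X - C (f i ^ 2)) := by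
      rw [← Stmt11Aux.charpoly_diagonal, ← Stmt11Aux.charpoly_diagonal, hDD, charpoly_conj_inv hPQ]
    obtain ⟨σ, hσ⟩ := exists_perm_of_multiset_eq (multiset_eq_of_prod_eq hchar)
    -- signs
    set ε : Fin n → ℝ := fun i => if f i = e (σ i) then 1 else -1 with hε
    have hfe : ∀ i, f i = (ε i : ℂ) * e (σ i) := by
      intro i
      by_cases hcase : f i = e (σ i)
      · rw [hε]; simp [hcase]
      · have hsq : (f i - e (σ i)) * (f i + e (σ i)) = 0 := by
          linear_combination -(hσ i)
        rcases mul_eq_zero.mp hsq with h0 | h0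
        · exact absurd (by linear_combination h0) hcase
        · rw [hε]; simp only [hcase, if_false]
          push_cast
          linear_combination h0
    -- permutation matrix
    set Pm : Matrix (Fin n) (Fin n) ℝ := Matrix.of (fun i j => if σ j = i then 1 else 0) with hPm
    have hPmO : Pmᵀ * Pm = 1 := by
      ext i j
      simp only [Matrix.mul_apply, Matrix.transpose_apply, hPm, Matrix.of_apply,
        Matrix.one_apply]
      have hterm : ∀ k, ((if σ i = k then (1:ℝ) else 0) * (if σ j = k then 1 else 0))
          = if σ i = k then (if σ j = k then (1:ℝ) else 0) else 0 := by
        intro k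
        by_cases h : σ i = k <;> simp [h]
      rw [Finset.sum_congr rfl (fun k _ => hterm k), Finset.sum_ite_eq]
      simp only [Finset.mem_univ, if_true]
      by_cases hij : i = j
      · subst hij; simp
      · rw [if_neg (fun h => hij (σ.injective h.symm)), if_neg hij]
    have hPmD : ∀ g : Fin n → ℂ, diagonal g * cM Pm = cM Pm * diagonal (fun i => g (σ i)) := by
      intro g
      ext i j
      rw [Matrix.diagonal_mul, Matrix.mul_diagonal]
      by_cases hij : σ j = i
      · subst hij; simp [cM, hPm]
      · simp [cM, hPm, hij]
    have hcPm : (cM Pm)ᵀ * cM Pm = 1 := by rw [cM_transpose, ← cM_mul, hPmO, cM_one]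
    -- the orthogonal matrices
    refine ⟨R₂ * diagonal ε * Pmᵀ * R₁ᵀ, O₂ * Pmᵀ * O₁ᵀ, ?_, ?_, ?_⟩
    · rw [mem_orthogonal_iff]
      refine ort_mul (ort_mul (ort_mul hR₂ ?_) (ort_transpose hPmO)) (ort_transpose hR₁)
      rw [Matrix.diagonal_transpose, Matrix.diagonal_mul_diagonal]
      ext i j
      by_cases hij : i = j
      · subst hij
        have : ε i * ε i = 1 := by rw [hε]; by_cases h : f i = e (σ i) <;> simp [h]
        simp [Matrix.diagonal_apply_eq, this]
      · simp [Matrix.diagonal_apply_ne _ hij, Matrix.one_apply_ne hij]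
    · rw [mem_orthogonal_iff]
      exact ort_mul (ort_mul hO₂ (ort_transpose hPmO)) (ort_transpose hO₁)
    · -- the equation
      have hk₂inv : ((O₂ * Pmᵀ * O₁ᵀ).map (fun x : ℝ => (x : ℂ)))⁻¹
          = cM (O₁ * Pm * O₂ᵀ) := by
        apply Matrix.inv_eq_left_inv
        show cM (O₁ * Pm * O₂ᵀ) * cM (O₂ * Pmᵀ * O₁ᵀ) = 1
        rw [← cM_mul, ← cM_one (n := n)]
        apply congrArg
        calc O₁ * Pm * O₂ᵀ * (O₂ * Pmᵀ * O₁ᵀ)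
            = O₁ * (Pm * ((O₂ᵀ * O₂) * (Pmᵀ * O₁ᵀ))) := by simp only [Matrix.mul_assoc]
        _ = O₁ * (Pm * (Pmᵀ * O₁ᵀ)) := by rw [hO₂, Matrix.one_mul]
        _ = O₁ * ((Pm * Pmᵀ) * O₁ᵀ) := by simp only [Matrix.mul_assoc]
        _ = O₁ * O₁ᵀ := by rw [mul_eq_one_comm.mp hPmO, Matrix.one_mul]
        _ = 1 := mul_eq_one_comm.mp hO₁
      show v = cM (R₂ * diagonal ε * Pmᵀ * R₁ᵀ) * u * _
      rw [hk₂inv]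
      rw [cM_mul, cM_mul, cM_mul, cM_mul, cM_mul, ← cM_transpose, ← cM_transpose,
        ← cM_transpose]
      -- key identities
      have hR₁u : (cM R₁)ᵀ * u = diagonal e * (cM O₁)ᵀ := by
        rw [hudec]
        simp only [Matrix.mul_assoc]
        rw [cancel_left hcR₁]
      have hEdE : cM (diagonal ε) * diagonal (fun i => e (σ i)) = diagonal f := by
        rw [cM_diagonal, Matrix.diagonal_mul_diagonal]
        rw [show (fun i => ((ε i : ℂ)) * e (σ i)) = f from funext fun i => (hfe i).symm]
      symm
      calc cM R₂ * cM (diagonal ε) * (cM Pm)ᵀ * (cM R₁)ᵀ * u * (cM O₁ * cM Pm * (cM O₂)ᵀ)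
          = cM R₂ * (cM (diagonal ε) * ((cM Pm)ᵀ * ((cM R₁)ᵀ * (u * (cM O₁ * (cM Pm * (cM O₂)ᵀ)))))) := by
            simp only [Matrix.mul_assoc]
      _ = cM R₂ * (cM (diagonal ε) * ((cM Pm)ᵀ * (diagonal e * ((cM O₁)ᵀ * (cM O₁ * (cM Pm * (cM O₂)ᵀ)))))) := by
            rw [mul_mul_of_eq hR₁u]
      _ = cM R₂ * (cM (diagonal ε) * ((cM Pm)ᵀ * (diagonal e * (cM Pm * (cM O₂)ᵀ)))) := by
            rw [cancel_left hcO₁]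
      _ = cM R₂ * (cM (diagonal ε) * ((cM Pm)ᵀ * (cM Pm * (diagonal (fun i => e (σ i)) * (cM O₂)ᵀ)))) := by
            rw [mul_mul_of_eq (hPmD e)]
      _ = cM R₂ * (cM (diagonal ε) * (diagonal (fun i => e (σ i)) * (cM O₂)ᵀ)) := by
            rw [cancel_left hcPm]
      _ = cM R₂ * (diagonal f * (cM O₂)ᵀ) := by
            rw [mul_collect hEdE]
      _ = v := by rw [hvdec, Matrix.mul_assoc]
  · rintro ⟨k₁, k₂, hk₁, hk₂, hveq⟩
    have hk₁o : k₁ᵀ * k₁ = 1 := (mem_orthogonal_iff k₁).mp hk₁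
    have hk₂o : k₂ᵀ * k₂ = 1 := (mem_orthogonal_iff k₂).mp hk₂
    have hck₁ : (cM k₁)ᵀ * cM k₁ = 1 := by rw [cM_transpose, ← cM_mul, hk₁o, cM_one]
    have hck₂ : (cM k₂)ᵀ * cM k₂ = 1 := by rw [cM_transpose, ← cM_mul, hk₂o, cM_one]
    have hck₂' : cM k₂ * (cM k₂)ᵀ = 1 := mul_eq_one_comm.mp hck₂
    have hk₂inv : ((k₂.map (fun x : ℝ => (x : ℂ))))⁻¹ = (cM k₂)ᵀ :=
      Matrix.inv_eq_left_inv hck₂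
    have hveq' : v = cM k₁ * u * (cM k₂)ᵀ := by rw [hveq, hk₂inv]; rfl
    refine ⟨cM k₂, ?_, ?_⟩
    · rw [Matrix.mem_unitaryGroup_iff, star_cM]
      exact hck₂'
    · have hinv : (cM k₂)⁻¹ = (cM k₂)ᵀ := Matrix.inv_eq_left_inv hck₂
      rw [hinv, hveq']
      have hvT : (cM k₁ * u * (cM k₂)ᵀ)ᵀ = cM k₂ * (uᵀ * (cM k₁)ᵀ) := by
        rw [Matrix.transpose_mul, Matrix.transpose_mul, Matrix.transpose_transpose]
      rw [hvT]
      calc cM k₂ * (uᵀ * u) * (cM k₂)ᵀ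
          = cM k₂ * (uᵀ * ((cM k₁)ᵀ * (cM k₁ * (u * (cM k₂)ᵀ)))) := by
            rw [cancel_left hck₁]
            simp only [Matrix.mul_assoc]
      _ = cM k₂ * (uᵀ * (cM k₁)ᵀ) * (cM k₁ * u * (cM k₂)ᵀ) := by
            simp only [Matrix.mul_assoc]
end

section
/- For any Lagrangian subspace L ⊂ ℂⁿ and any v ∈ U(n) with v(L) = L₀, one has σ_{L₀} ∘ σ_L = vᵗ v (as complex-linear maps on ℂⁿ). -/
open Matrix

lemma key_aux {n : ℕ} (L : Submodule ℝ (Fin n → ℂ))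
    (v : Matrix (Fin n) (Fin n) ℂ) (hv : v ∈ Matrix.unitaryGroup (Fin n) ℂ)
    (hvL : (fun z => v.mulVec z) '' (L : Set (Fin n → ℂ)) = L0set n)
    (x : Fin n → ℂ) (hx : x ∈ L) :
    (fun i => (starRingEnd ℂ) (x i)) = (vᵀ * v).mulVec x := by
  have hmem : v.mulVec x ∈ L0set n := by
    rw [← hvL]; exact ⟨x, hx, rfl⟩
  have hreal : ∀ i, (starRingEnd ℂ) ((v.mulVec x) i) = (v.mulVec x) i := fun i =>
    Complex.conj_eq_iff_im.mpr (hmem i)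
  have h1 : (v.map (starRingEnd ℂ)).mulVec (fun j => (starRingEnd ℂ) (x j)) = v.mulVec x := by
    funext i
    have : (v.map (starRingEnd ℂ)).mulVec (fun j => (starRingEnd ℂ) (x j)) i
        = (starRingEnd ℂ) ((v.mulVec x) i) := by
      simp [Matrix.mulVec, dotProduct, Matrix.map_apply, map_sum]
    rw [this, hreal i]
  have h2 : vᵀ * v.map (starRingEnd ℂ) = 1 := by
    ext i j
    have hL : (vᵀ * v.map (starRingEnd ℂ)) i j = (starRingEnd ℂ) ((star v * v) i j) := by
      simp [Matrix.mul_apply, Matrix.transpose_apply, Matrix.map_apply,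
        Matrix.star_eq_conjTranspose, Matrix.conjTranspose_apply, map_sum, mul_comm]
    rw [hL, hv.1]
    simp [Matrix.one_apply]
  calc (fun i => (starRingEnd ℂ) (x i))
      = (vᵀ * v.map (starRingEnd ℂ)).mulVec (fun i => (starRingEnd ℂ) (x i)) := by
        rw [h2, Matrix.one_mulVec]
    _ = vᵀ.mulVec ((v.map (starRingEnd ℂ)).mulVec (fun i => (starRingEnd ℂ) (x i))) := by
        rw [Matrix.mulVec_mulVec]
    _ = vᵀ.mulVec (v.mulVec x) := by rw [h1]
    _ = (vᵀ * v).mulVec x := by rw [Matrix.mulVec_mulVec]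

/-- For a Lagrangian `L ⊂ ℂⁿ` and a unitary `v` with `v(L) = L₀`, one has
`σ_{L₀} ∘ σ_L = vᵀ v`, i.e. `conj (σ_L z) = (vᵀ v) z` for all `z`. -/
theorem stmt_12 (n : ℕ) (L : Submodule ℝ (Fin n → ℂ)) (hL : IsLagrangian L)
    (σ : (Fin n → ℂ) →ₗ[ℝ] (Fin n → ℂ)) (hσ : IsLagInv L σ)
    (v : Matrix (Fin n) (Fin n) ℂ) (hv : v ∈ Matrix.unitaryGroup (Fin n) ℂ)
    (hvL : (fun z => v.mulVec z) '' (L : Set (Fin n → ℂ)) = L0set n) :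
    ∀ z : Fin n → ℂ, (fun i => (starRingEnd ℂ) (σ z i)) = (vᵀ * v).mulVec z := by
  intro z
  -- decompose v z into real and imaginary parts
  set a : Fin n → ℂ := fun i => (((v.mulVec z) i).re : ℂ) with ha
  set b : Fin n → ℂ := fun i => (((v.mulVec z) i).im : ℂ) with hb
  have hvz : v.mulVec z = a + Complex.I • b := by
    funext i
    simp [ha, hb, Complex.ext_iff]
  set x : Fin n → ℂ := (star v).mulVec a with hxdef
  set y : Fin n → ℂ := (star v).mulVec b with hydef
  have hsv : star v * v = 1 := hv.1
  have hvs : v * star v = 1 := hv.2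
  have hvx : v.mulVec x = a := by
    rw [hxdef, Matrix.mulVec_mulVec, hvs, Matrix.one_mulVec]
  have hvy : v.mulVec y = b := by
    rw [hydef, Matrix.mulVec_mulVec, hvs, Matrix.one_mulVec]
  have hmemL : ∀ c : Fin n → ℂ, (∀ i, (c i).im = 0) → (star v).mulVec c ∈ L := by
    intro c hc
    have : c ∈ L0set n := hc
    rw [← hvL] at this
    obtain ⟨w, hw, hwc⟩ := this
    have : (star v).mulVec c = w := by
      rw [← hwc]
      simp only [Matrix.mulVec_mulVec, hsv, Matrix.one_mulVec]
    rwa [this]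
  have hxL : x ∈ L := hmemL a (fun i => by simp [ha])
  have hyL : y ∈ L := hmemL b (fun i => by simp [hb])
  have hz : z = x + Complex.I • y := by
    have : (star v).mulVec (v.mulVec z) = z := by
      rw [Matrix.mulVec_mulVec, hsv, Matrix.one_mulVec]
    rw [← this, hvz, Matrix.mulVec_add, Matrix.mulVec_smul]
  have hσz : σ z = x - Complex.I • y := by
    rw [hz, map_add, (hσ.1 x hxL), (hσ.2 y hyL)]
    ring_nf
  have hx' := key_aux L v hv hvL x hxL
  have hy' := key_aux L v hv hvL y hyL
  funext i
  have hxi := congrFun hx' i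
  have hyi := congrFun hy' i
  rw [hσz]
  have hzrw : (vᵀ * v).mulVec z i = (vᵀ * v).mulVec x i + Complex.I * (vᵀ * v).mulVec y i := by
    rw [hz, Matrix.mulVec_add, Matrix.mulVec_smul]
    simp
  rw [hzrw, ← hxi, ← hyi]
  simp [Pi.sub_apply, Pi.smul_apply, smul_eq_mul, _root_.map_mul, Complex.conj_I]
end

section
/- The involution β(u₁,u₂,u₃) = ( ū₃⁻¹ ū₂⁻¹ u₁ᵗ ū₂ ū₃, ū₃⁻¹ u₂ᵗ ū₃, u₃ᵗ ) on U(n)³ intertwines the diagonal conjugation action with complex conjugation: for all φ ∈ U(n), β(φu₁φ⁻¹, φu₂φ⁻¹, φu₃φ⁻¹) = (φ̄ v₁ φ̄⁻¹, φ̄ v₂ φ̄⁻¹, φ̄ v₃ φ̄⁻¹), where (v₁,v₂,v₃) = β(u₁,u₂,u₃). Moreover, μ(β(u₁,u₂,u₃)) = (conj(μ(u₁,u₂,u₃)))⁻¹ where μ(u₁,u₂,u₃) = u₁u₂u₃. -/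
open Matrix

/-- Entrywise complex conjugation of a matrix. -/
noncomputable def conjMat {n : ℕ} (u : Matrix (Fin n) (Fin n) ℂ) : Matrix (Fin n) (Fin n) ℂ :=
  u.map (starRingEnd ℂ)

/-- The involution `β(u₁,u₂,u₃) = (ū₃⁻¹ ū₂⁻¹ u₁ᵀ ū₂ ū₃, ū₃⁻¹ u₂ᵀ ū₃, u₃ᵀ)` on `U(n)³`. -/
noncomputable def betaMap (n : ℕ)
    (t : Matrix (Fin n) (Fin n) ℂ × Matrix (Fin n) (Fin n) ℂ × Matrix (Fin n) (Fin n) ℂ) :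
    Matrix (Fin n) (Fin n) ℂ × Matrix (Fin n) (Fin n) ℂ × Matrix (Fin n) (Fin n) ℂ :=
  ((conjMat t.2.2)⁻¹ * (conjMat t.2.1)⁻¹ * (t.1)ᵀ * conjMat t.2.1 * conjMat t.2.2,
   (conjMat t.2.2)⁻¹ * (t.2.1)ᵀ * conjMat t.2.2,
   (t.2.2)ᵀ)

lemma conjMat_one {n : ℕ} : conjMat (1 : Matrix (Fin n) (Fin n) ℂ) = 1 := by
  ext i j; simp [conjMat, Matrix.one_apply]

lemma conjMat_mul {n : ℕ} (a b : Matrix (Fin n) (Fin n) ℂ) :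
    conjMat (a * b) = conjMat a * conjMat b := Matrix.map_mul

lemma conjMat_conjMat {n : ℕ} (a : Matrix (Fin n) (Fin n) ℂ) : conjMat (conjMat a) = a := by
  ext i j; simp [conjMat]

lemma conjMat_transpose {n : ℕ} (a : Matrix (Fin n) (Fin n) ℂ) :
    conjMat aᵀ = (conjMat a)ᵀ := rfl

lemma star_eq_conj_t {n : ℕ} (a : Matrix (Fin n) (Fin n) ℂ) : star a = (conjMat a)ᵀ := by
  ext i j; simp [conjMat, Matrix.star_apply]

lemma conjMat_mul_transpose {n : ℕ} {u : Matrix (Fin n) (Fin n) ℂ}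
    (hu : u ∈ Matrix.unitaryGroup (Fin n) ℂ) : conjMat u * uᵀ = 1 := by
  have h : u * star u = 1 := hu.2
  have := congrArg conjMat h
  rwa [conjMat_mul, star_eq_conj_t, conjMat_transpose, conjMat_conjMat, conjMat_one] at this

lemma transpose_mul_conjMat {n : ℕ} {u : Matrix (Fin n) (Fin n) ℂ}
    (hu : u ∈ Matrix.unitaryGroup (Fin n) ℂ) : uᵀ * conjMat u = 1 := by
  have h : star u * u = 1 := hu.1
  have := congrArg Matrix.transpose h
  rwa [Matrix.transpose_mul, star_eq_conj_t, Matrix.transpose_transpose,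
    Matrix.transpose_one] at this

lemma conjMat_inv {n : ℕ} {u : Matrix (Fin n) (Fin n) ℂ}
    (hu : u ∈ Matrix.unitaryGroup (Fin n) ℂ) : (conjMat u)⁻¹ = uᵀ :=
  Matrix.inv_eq_right_inv (conjMat_mul_transpose hu)

lemma unitary_inv {n : ℕ} {u : Matrix (Fin n) (Fin n) ℂ}
    (hu : u ∈ Matrix.unitaryGroup (Fin n) ℂ) : u⁻¹ = star u :=
  Matrix.inv_eq_right_inv hu.2

/-- `β` intertwines the diagonal conjugation action of `U(n)` with complex
conjugation, and `μ ∘ β = (conj ∘ μ)⁻¹` where `μ(u₁,u₂,u₃) = u₁u₂u₃`. -/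
theorem stmt_15 (n : ℕ) (u₁ u₂ u₃ φ : Matrix (Fin n) (Fin n) ℂ)
    (h₁ : u₁ ∈ Matrix.unitaryGroup (Fin n) ℂ) (h₂ : u₂ ∈ Matrix.unitaryGroup (Fin n) ℂ)
    (h₃ : u₃ ∈ Matrix.unitaryGroup (Fin n) ℂ) (hφ : φ ∈ Matrix.unitaryGroup (Fin n) ℂ) :
    (betaMap n (φ * u₁ * φ⁻¹, φ * u₂ * φ⁻¹, φ * u₃ * φ⁻¹) =
      (conjMat φ * (betaMap n (u₁, u₂, u₃)).1 * (conjMat φ)⁻¹,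
       conjMat φ * (betaMap n (u₁, u₂, u₃)).2.1 * (conjMat φ)⁻¹,
       conjMat φ * (betaMap n (u₁, u₂, u₃)).2.2 * (conjMat φ)⁻¹)) ∧
    (betaMap n (u₁, u₂, u₃)).1 * (betaMap n (u₁, u₂, u₃)).2.1 *
        (betaMap n (u₁, u₂, u₃)).2.2 = (conjMat (u₁ * u₂ * u₃))⁻¹ := by
  have hφi : φ⁻¹ ∈ Matrix.unitaryGroup (Fin n) ℂ := by
    rw [unitary_inv hφ]; exact Unitary.star_mem hφ
  have hA₂ : φ * u₂ * φ⁻¹ ∈ Matrix.unitaryGroup (Fin n) ℂ :=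
    mul_mem (mul_mem hφ h₂) hφi
  have hA₃ : φ * u₃ * φ⁻¹ ∈ Matrix.unitaryGroup (Fin n) ℂ :=
    mul_mem (mul_mem hφ h₃) hφi
  have h123 : u₁ * u₂ * u₃ ∈ Matrix.unitaryGroup (Fin n) ℂ := mul_mem (mul_mem h₁ h₂) h₃
  have hinv : φ⁻¹ = (conjMat φ)ᵀ := by rw [unitary_inv hφ, star_eq_conj_t]
  have c1 : φᵀ * conjMat φ = 1 := transpose_mul_conjMat hφ
  have c2 : conjMat φ * φᵀ = 1 := conjMat_mul_transpose hφ
  have c1' : ∀ x : Matrix (Fin n) (Fin n) ℂ, φᵀ * (conjMat φ * x) = x := by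
    intro x; rw [← mul_assoc, c1, one_mul]
  have c2' : ∀ x : Matrix (Fin n) (Fin n) ℂ, conjMat φ * (φᵀ * x) = x := by
    intro x; rw [← mul_assoc, c2, one_mul]
  have d2 : ∀ x : Matrix (Fin n) (Fin n) ℂ, conjMat u₂ * (u₂ᵀ * x) = x := by
    intro x; rw [← mul_assoc, conjMat_mul_transpose h₂, one_mul]
  have d3 : ∀ x : Matrix (Fin n) (Fin n) ℂ, conjMat u₃ * (u₃ᵀ * x) = x := by
    intro x; rw [← mul_assoc, conjMat_mul_transpose h₃, one_mul]
  have d1 : ∀ x : Matrix (Fin n) (Fin n) ℂ, conjMat u₁ * (u₁ᵀ * x) = x := by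
    intro x; rw [← mul_assoc, conjMat_mul_transpose h₁, one_mul]
  have e₂ : (conjMat φ * (conjMat u₂ * φᵀ))⁻¹ = conjMat φ * (u₂ᵀ * φᵀ) :=
    Matrix.inv_eq_right_inv (by simp [mul_assoc, c1', d2, c2])
  have e₃ : (conjMat φ * (conjMat u₃ * φᵀ))⁻¹ = conjMat φ * (u₃ᵀ * φᵀ) :=
    Matrix.inv_eq_right_inv (by simp [mul_assoc, c1', d3, c2])
  have e₀ : (conjMat u₁ * (conjMat u₂ * conjMat u₃))⁻¹ = u₃ᵀ * (u₂ᵀ * u₁ᵀ) :=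
    Matrix.inv_eq_right_inv (by simp [mul_assoc, d1, d2, d3, conjMat_mul_transpose h₁])
  constructor
  · simp only [betaMap, conjMat_inv hA₂, conjMat_inv hA₃, conjMat_inv h₂, conjMat_inv h₃,
      conjMat_inv hφ, hinv, conjMat_mul, conjMat_transpose, conjMat_conjMat,
      Matrix.transpose_mul, Matrix.transpose_transpose, Prod.mk.injEq, mul_assoc, e₂, e₃]
    refine ⟨?_, ?_, ?_⟩ <;>
      simp [mul_assoc, c1, c2, c1', c2', conjMat_mul_transpose h₂, conjMat_mul_transpose h₃,
        d2, d3, transpose_mul_conjMat h₂, transpose_mul_conjMat h₃]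
  · simp only [betaMap, conjMat_inv h₂, conjMat_inv h₃, conjMat_inv h123, conjMat_mul,
      Matrix.transpose_mul, mul_assoc, e₀]
    simp [mul_assoc, d2, d3, conjMat_mul_transpose h₂, conjMat_mul_transpose h₃]
end
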